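/- (Second Lie derivative of the transformed distance constraint for the unicycle: both controls appear.) Along any solution of the unicycle model, the transformed distance D is twice differentiable and for all t, D''(t) = (P/(M·D))·u₂ + (d·Q/D)·u₁ + (v·(v + φ·Q) + d·φ·(d·φ − φ·P))/D − (v·P + d·φ·Q)²/D³ (all functions evaluated at t). In particular both control inputs u₁ and u₂ appear linearly, with coefficients d·Q/D and P/(M·D) respectively, so the transformed constraint has unique relative degree 2 with respect to both control components. -/

import Mathlib

/-- Second Lie derivative of the transformed distance constraint for the
unicycle: both controls appear linearly, with coefficients `d Q / D` for
`u₁` and `P/(M D)` for `u₂`. -/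
theorem unicycle_transformed_second_derivative
    (M : ℝ) (hM : 0 < M)
    (x y v θ φ u₁ u₂ : ℝ → ℝ)
    (hx : Differentiable ℝ x) (hy : Differentiable ℝ y)
    (hv : Differentiable ℝ v) (hθ : Differentiable ℝ θ)
    (hφ : Differentiable ℝ φ)
    (hu₁ : Continuous u₁) (hu₂ : Continuous u₂)
    (hdx : ∀ t, deriv x t = v t * Real.cos (θ t))
    (hdy : ∀ t, deriv y t = v t * Real.sin (θ t))
    (hdv : ∀ t, deriv v t = u₂ t / M)
    (hdθ : ∀ t, deriv θ t = φ t)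
    (hdφ : ∀ t, deriv φ t = u₁ t)
    (d : ℝ) (hd : 0 < d)
    (x₀ y₀ : ℝ) (X Y D P Q : ℝ → ℝ)
    (hX : ∀ t, X t = x t + d * Real.cos (θ t))
    (hY : ∀ t, Y t = y t + d * Real.sin (θ t))
    (hD : ∀ t, D t = Real.sqrt ((X t - x₀) ^ 2 + (Y t - y₀) ^ 2))
    (hP : ∀ t, P t = (X t - x₀) * Real.cos (θ t) + (Y t - y₀) * Real.sin (θ t))
    (hQ : ∀ t, Q t = -(X t - x₀) * Real.sin (θ t) + (Y t - y₀) * Real.cos (θ t))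
    (hDpos : ∀ t, 0 < D t)
    : (Differentiable ℝ D ∧ Differentiable ℝ (deriv D)) ∧
      ∀ t, deriv (deriv D) t =
        (P t / (M * D t)) * u₂ t + (d * Q t / D t) * u₁ t
          + (v t * (v t + φ t * Q t)
              + d * φ t * (d * φ t - φ t * P t)) / D t
          - (v t * P t + d * φ t * Q t) ^ 2 / (D t) ^ 3 := by
  have hct : ∀ t, HasDerivAt (fun τ => Real.cos (θ τ)) (-Real.sin (θ t) * φ t) t := by
    intro t
    have := (Real.hasDerivAt_cos (θ t)).comp t (hθ t).hasDerivAt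
    rw [hdθ t] at this
    exact this
  have hst : ∀ t, HasDerivAt (fun τ => Real.sin (θ τ)) (Real.cos (θ t) * φ t) t := by
    intro t
    have := (Real.hasDerivAt_sin (θ t)).comp t (hθ t).hasDerivAt
    rw [hdθ t] at this
    exact this
  have hA : ∀ t, HasDerivAt (fun τ => x τ + d * Real.cos (θ τ) - x₀)
      (v t * Real.cos (θ t) - d * (φ t * Real.sin (θ t))) t := by
    intro t
    have hxt : HasDerivAt x (v t * Real.cos (θ t)) t := hdx t ▸ (hx t).hasDerivAt
    have := (hxt.add ((hct t).const_mul d)).sub_const x₀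
    convert this using 1
    · rfl
    · rfl
    · rfl
    ring
  have hB : ∀ t, HasDerivAt (fun τ => y τ + d * Real.sin (θ τ) - y₀)
      (v t * Real.sin (θ t) + d * (φ t * Real.cos (θ t))) t := by
    intro t
    have hyt : HasDerivAt y (v t * Real.sin (θ t)) t := hdy t ▸ (hy t).hasDerivAt
    have := (hyt.add ((hst t).const_mul d)).sub_const y₀
    convert this using 1
    · rfl
    · rfl
    · rfl
    ring
  have hSpos : ∀ t, 0 < (x t + d * Real.cos (θ t) - x₀) ^ 2 + (y t + d * Real.sin (θ t) - y₀) ^ 2 := by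
    intro t
    have h := hDpos t
    rw [hD t, hX t, hY t] at h
    exact Real.sqrt_pos.mp h
  have hDeq : ∀ t, D t = Real.sqrt ((x t + d * Real.cos (θ t) - x₀) ^ 2 + (y t + d * Real.sin (θ t) - y₀) ^ 2) := by
    intro t; rw [hD t, hX t, hY t]
  have hDfun : D = fun t => Real.sqrt ((x t + d * Real.cos (θ t) - x₀) ^ 2 + (y t + d * Real.sin (θ t) - y₀) ^ 2) :=
    funext hDeq
  have hDt : ∀ t, HasDerivAt D ((v t * P t + d * (φ t * Q t)) / D t) t := by
    intro t
    have hS : HasDerivAt (fun τ => (x τ + d * Real.cos (θ τ) - x₀) ^ 2 + (y τ + d * Real.sin (θ τ) - y₀) ^ 2)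
        (2 * (x t + d * Real.cos (θ t) - x₀) * (v t * Real.cos (θ t) - d * (φ t * Real.sin (θ t)))
          + 2 * (y t + d * Real.sin (θ t) - y₀) * (v t * Real.sin (θ t) + d * (φ t * Real.cos (θ t)))) t := by
      have := ((hA t).pow 2).add ((hB t).pow 2)
      convert this using 1
      · rfl
      · rfl
      · rfl
      ring
    have hsq0 := (Real.hasDerivAt_sqrt (ne_of_gt (hSpos t))).comp t hS
    have hsq : HasDerivAt (fun τ => Real.sqrt ((x τ + d * Real.cos (θ τ) - x₀) ^ 2 + (y τ + d * Real.sin (θ τ) - y₀) ^ 2))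
        (1 / (2 * Real.sqrt ((x t + d * Real.cos (θ t) - x₀) ^ 2 + (y t + d * Real.sin (θ t) - y₀) ^ 2)) *
          (2 * (x t + d * Real.cos (θ t) - x₀) * (v t * Real.cos (θ t) - d * (φ t * Real.sin (θ t)))
            + 2 * (y t + d * Real.sin (θ t) - y₀) * (v t * Real.sin (θ t) + d * (φ t * Real.cos (θ t))))) t := hsq0
    rw [← hDfun] at hsq
    convert hsq using 1
    have hr : (0:ℝ) < Real.sqrt ((x t + d * Real.cos (θ t) - x₀) ^ 2 + (y t + d * Real.sin (θ t) - y₀) ^ 2) :=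
      Real.sqrt_pos.mpr (hSpos t)
    rw [hDeq t, hP t, hQ t, hX t, hY t]
    field_simp
    ring
  have hDdiff : Differentiable ℝ D := fun t => (hDt t).differentiableAt
  have hderivD : deriv D = fun t => (v t * P t + d * (φ t * Q t)) / D t :=
    funext fun t => (hDt t).deriv
  have hPt : ∀ t, HasDerivAt P (v t + φ t * Q t) t := by
    intro t
    have hPfun : P = fun τ => (x τ + d * Real.cos (θ τ) - x₀) * Real.cos (θ τ)
        + (y τ + d * Real.sin (θ τ) - y₀) * Real.sin (θ τ) :=
      funext fun τ => by rw [hP τ, hX τ, hY τ]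
    rw [hPfun]
    have h := ((hA t).mul (hct t)).add ((hB t).mul (hst t))
    convert h using 1
    · rfl
    · rfl
    · rfl
    rw [hQ t, hX t, hY t]
    have pyth := Real.sin_sq_add_cos_sq (θ t)
    linear_combination (-(v t)) * pyth
  have hQt : ∀ t, HasDerivAt Q (d * φ t - φ t * P t) t := by
    intro t
    have hQfun : Q = fun τ => -(x τ + d * Real.cos (θ τ) - x₀) * Real.sin (θ τ)
        + (y τ + d * Real.sin (θ τ) - y₀) * Real.cos (θ τ) :=
      funext fun τ => by rw [hQ τ, hX τ, hY τ]
    rw [hQfun]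
    have h := (((hA t).neg).mul (hst t)).add ((hB t).mul (hct t))
    convert h using 1
    · rfl
    · rfl
    · rfl
    rw [hP t, hX t, hY t]
    simp only [Pi.neg_apply]
    have pyth := Real.sin_sq_add_cos_sq (θ t)
    linear_combination (-(d * φ t)) * pyth
  have hNt : ∀ t, HasDerivAt (fun τ => v τ * P τ + d * (φ τ * Q τ))
      ((u₂ t / M * P t + v t * (v t + φ t * Q t))
        + d * (u₁ t * Q t + φ t * (d * φ t - φ t * P t))) t := by
    intro t
    have hvt : HasDerivAt v (u₂ t / M) t := hdv t ▸ (hv t).hasDerivAt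
    have hφt : HasDerivAt φ (u₁ t) t := hdφ t ▸ (hφ t).hasDerivAt
    exact (hvt.mul (hPt t)).add (((hφt.mul (hQt t))).const_mul d)
  have hFt : ∀ t, HasDerivAt (fun τ => (v τ * P τ + d * (φ τ * Q τ)) / D τ)
      ((((u₂ t / M * P t + v t * (v t + φ t * Q t))
          + d * (u₁ t * Q t + φ t * (d * φ t - φ t * P t))) * D t
        - (v t * P t + d * (φ t * Q t)) * ((v t * P t + d * (φ t * Q t)) / D t)) / D t ^ 2) t :=
    fun t => (hNt t).div (hDt t) (ne_of_gt (hDpos t))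
  refine ⟨⟨hDdiff, ?_⟩, ?_⟩
  · rw [hderivD]
    exact fun t => (hFt t).differentiableAt
  · intro t
    rw [hderivD, (hFt t).deriv]
    have hDne : D t ≠ 0 := ne_of_gt (hDpos t)
    have hMne : M ≠ 0 := ne_of_gt hM
    field_simp
    ring
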